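/- arXiv:2101.00437 — 5 statements merged into one kernel-verified Lean document; each statement's English description precedes it below -/
import Mathlib

section
/- Let M be a median algebra. For all x, y, z in M, y lies in the interval [x, z] if and only if the intersection of the intervals [x, y] and [y, z] equals {y}. -/
def MedInterval {M : Type*} (m : M → M → M → M) (x y : M) : Set M := {u | m x y u = u}

def IsMedian {M : Type*} (m : M → M → M → M) : Prop :=
  (∀ x y z, m x y z = m x z y) ∧ (∀ x y z, m x y z = m y x z) ∧
  (∀ x y, m x x y = x) ∧
  (∀ x y z u v, m (m x y z) u v = m x (m y u v) (m z u v))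

theorem stmt1 {M : Type*} (m : M → M → M → M) (hm : IsMedian m)
    (x y z : M) :
    y ∈ MedInterval m x z ↔ MedInterval m x y ∩ MedInterval m y z = {y} := by
  obtain ⟨s1, s2, idem, dist⟩ := hm
  have rot : ∀ a b c, m a b c = m c a b := fun a b c => by rw [s2, s1, s2, s1]
  simp only [MedInterval, Set.mem_setOf_eq]
  constructor
  · intro hy
    ext u
    simp only [Set.mem_inter_iff, Set.mem_setOf_eq, Set.mem_singleton_iff]
    constructor
    · rintro ⟨h1, h2⟩
      have key := dist y z u x y
      rw [h2] at key
      have hz : m z x y = y := by rw [s2]; exact hy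
      rw [hz, idem] at key
      -- key : m u x y = y
      have h3 : m u x y = u := (rot x y u).symm.trans h1
      exact h3.symm.trans key
    · rintro rfl
      exact ⟨by rw [rot, s1]; exact idem _ x, by rw [s1]; exact idem _ z⟩
  · intro h
    have hyxy : m y x y = y := by rw [s1]; exact idem y x
    have hzyz : m z y z = z := by rw [s1]; exact idem z y
    have t1 : m x y (m x z y) = m x z y := by
      have d := dist z x y x y
      rw [idem, hyxy, s2 z x y] at d
      exact (rot x y (m x z y)).trans d
    have t2 : m y z (m x z y) = m x z y := by
      have d := dist x y z y z
      rw [idem, hzyz, s1 x y z] at d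
      exact (rot y z (m x z y)).trans d
    have mem : m x z y ∈ ({y} : Set M) := h ▸ Set.mem_inter t1 t2
    exact mem
end

section
/- Let M be a median algebra and let C₁, ..., Cₙ be convex subsets of M such that Cᵢ ∩ Cⱼ ≠ ∅ for all i ≠ j. Then the full intersection C₁ ∩ ... ∩ Cₙ is nonempty (Helly's theorem for median algebras). -/
def MedConvex {M : Type*} (m : M → M → M → M) (C : Set M) : Prop :=
  ∀ x ∈ C, ∀ y ∈ C, MedInterval m x y ⊆ C

lemma med_mem_interval {M : Type*} {m : M → M → M → M} (hm : IsMedian m)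
    (a b c : M) : m a b c ∈ MedInterval m b c := by
  obtain ⟨h1, h2, h3, h4⟩ := hm
  have comm13 : ∀ x y z, m x y z = m z y x := fun x y z =>
    (h2 x y z).trans ((h1 y x z).trans (h2 y z x))
  show m b c (m a b c) = m a b c
  calc m b c (m a b c) = m (m a b c) c b := comm13 b c (m a b c)
    _ = m (m a b c) b c := h1 _ _ _
    _ = m a (m b b c) (m c b c) := h4 a b c b c
    _ = m a b (m c b c) := by rw [h3]
    _ = m a b (m c c b) := by rw [h1 c b c]
    _ = m a b c := by rw [h3]

/-- for three convex sets with pairwise nonempty intersections, the triple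
intersection is nonempty -/
lemma helly3 {M : Type*} {m : M → M → M → M} (hm : IsMedian m)
    {A B D : Set M} (hA : MedConvex m A) (hB : MedConvex m B) (hD : MedConvex m D)
    (hBD : (B ∩ D).Nonempty) (hAD : (A ∩ D).Nonempty) (hAB : (A ∩ B).Nonempty) :
    (A ∩ B ∩ D).Nonempty := by
  obtain ⟨a, haB, haD⟩ := hBD
  obtain ⟨b, hbA, hbD⟩ := hAD
  obtain ⟨c, hcA, hcB⟩ := hAB
  have comm12 := hm.2.1
  refine ⟨m a b c, ⟨?_, ?_⟩, ?_⟩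
  · exact hA b hbA c hcA (med_mem_interval hm a b c)
  · -- m a b c = m b a c ∈ [a,c] ⊆ B
    have : m b a c ∈ B := hB a haB c hcB (med_mem_interval hm b a c)
    rwa [comm12] 
  · -- m a b c = m c b a = m c a b... ∈ [a,b] ⊆ D
    have h1 := hm.1
    have : m c a b ∈ D := hD a haD b hbD (med_mem_interval hm c a b)
    have e : m c a b = m a b c := (comm12 c a b).trans (h1 a c b)
    rwa [e] at this

theorem helly_aux {M : Type*} (m : M → M → M → M) (hm : IsMedian m) :
    ∀ (n : ℕ) (C : Fin (n+1) → Set M), (∀ i, MedConvex m (C i)) →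
    (∀ i, (C i).Nonempty) →
    (∀ i j, i ≠ j → (C i ∩ C j).Nonempty) → (⋂ i, C i).Nonempty := by
  intro n
  induction n with
  | zero =>
    intro C _ hne _
    obtain ⟨x, hx⟩ := hne 0
    exact ⟨x, by simpa [Set.mem_iInter, Fin.forall_fin_one] using hx⟩
  | succ n ih =>
    intro C hconv hne hpair
    set L : Fin (n+2) := Fin.last (n+1) with hL
    set D : Fin (n+1) → Set M := fun i => C i.castSucc ∩ C L with hD
    have hDconv : ∀ i, MedConvex m (D i) := by
      intro i x hx y hy u hu
      exact ⟨hconv _ x hx.1 y hy.1 hu, hconv _ x hx.2 y hy.2 hu⟩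
    have hcs : ∀ i : Fin (n+1), i.castSucc ≠ L := fun i => Fin.castSucc_lt_last i |>.ne
    have hDne : ∀ i, (D i).Nonempty := fun i => hpair _ _ (hcs i)
    have hDpair : ∀ i j, i ≠ j → (D i ∩ D j).Nonempty := by
      intro i j hij
      have hij' : (i.castSucc : Fin (n+2)) ≠ j.castSucc := by
        simpa using hij
      have h3 := helly3 hm (hconv i.castSucc) (hconv j.castSucc) (hconv L)
        (hpair _ _ (hcs j)) (hpair _ _ (hcs i)) (hpair _ _ hij')
      obtain ⟨x, ⟨hx1, hx2⟩, hx3⟩ := h3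
      exact ⟨x, ⟨hx1, hx3⟩, ⟨hx2, hx3⟩⟩
    obtain ⟨x, hx⟩ := ih D hDconv hDne hDpair
    simp only [Set.mem_iInter] at hx
    refine ⟨x, Set.mem_iInter.2 fun k => ?_⟩
    rcases Fin.eq_castSucc_or_eq_last k with ⟨i, rfl⟩ | rfl
    · exact (hx i).1
    · exact (hx 0).2

/-- Helly's theorem for median algebras. -/
theorem stmt4 {M : Type*} (m : M → M → M → M) (hm : IsMedian m)
    (n : ℕ) (hn : 0 < n) (C : Fin n → Set M) (hconv : ∀ i, MedConvex m (C i))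
    (hne : ∀ i, (C i).Nonempty)
    (hpair : ∀ i j, i ≠ j → (C i ∩ C j).Nonempty) :
    (⋂ i, C i).Nonempty := by
  obtain ⟨k, rfl⟩ := Nat.exists_eq_succ_of_ne_zero hn.ne'
  exact helly_aux m hm k C hconv hne hpair
end

section
/- Let M be a median algebra, and let A, B ⊆ M be disjoint nonempty subsets with A gate-convex. Then there exists a ∈ A such that the set of half-spaces separating A from B equals the set of half-spaces separating {a} from B. Specifically, if b ∈ B and a is the gate of b in A, then every half-space containing a and disjoint from B also contains A. -/
def IsHalfSpace {M : Type*} (m : M → M → M → M) (h : Set M) : Prop :=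
  MedConvex m h ∧ MedConvex m hᶜ ∧ hᶜ.Nonempty

def IsGate {M : Type*} (m : M → M → M → M) (C : Set M) (x y : M) : Prop :=
  y ∈ C ∧ ∀ z ∈ C, y ∈ MedInterval m x z

def GateConvex {M : Type*} (m : M → M → M → M) (C : Set M) : Prop :=
  ∀ x : M, ∃ y : M, IsGate m C x y

lemma key5 {M : Type*} (m : M → M → M → M)
    (A B : Set M) (b : M) (hb : b ∈ B) (a : M) (hg : IsGate m A b a)
    (h : Set M) (hh : IsHalfSpace m h) (ha : a ∈ h) (hBc : B ⊆ hᶜ) : A ⊆ h := by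
  intro x hx
  by_contra hxh
  have : a ∈ hᶜ := hh.2.1 b (hBc hb) x hxh (hg.2 x hx)
  exact this ha

theorem stmt5 {M : Type*} (m : M → M → M → M) (hm : IsMedian m)
    (A B : Set M) (hAB : Disjoint A B) (hA : A.Nonempty) (hB : B.Nonempty)
    (hgc : GateConvex m A) :
    (∃ a ∈ A, {h : Set M | IsHalfSpace m h ∧ A ⊆ h ∧ B ⊆ hᶜ} =
        {h : Set M | IsHalfSpace m h ∧ a ∈ h ∧ B ⊆ hᶜ}) ∧
    (∀ b ∈ B, ∀ a : M, IsGate m A b a →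
      ∀ h : Set M, IsHalfSpace m h → a ∈ h → B ⊆ hᶜ → A ⊆ h) := by
  obtain ⟨b, hb⟩ := hB
  obtain ⟨a, hg⟩ := hgc b
  constructor
  · refine ⟨a, hg.1, ?_⟩
    ext h
    simp only [Set.mem_setOf_eq]
    constructor
    · rintro ⟨hh, hAh, hBh⟩; exact ⟨hh, hAh hg.1, hBh⟩
    · rintro ⟨hh, hah, hBh⟩
      exact ⟨hh, key5 m A B b hb a hg h hh hah hBh, hBh⟩
  · intro b' hb' a' hg' h hh ha' hBh
    exact key5 m A B b' hb' a' hg' h hh ha' hBh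
end

section
/- Let μ be a balanced probability measure on the finite cube M = {0,1}ⁿ (with coordinatewise majority median) such that μ is fully supported (every point has positive measure). Then μ is the uniform measure: μ(x) = 1/2ⁿ for every x ∈ M. -/
open MeasureTheory Finset

noncomputable def selfMedian {M : Type*} [MeasurableSpace M] (m : M → M → M → M)
    (μ : Measure M) : Measure M :=
  Measure.map (fun p : M × M × M => m p.1 p.2.1 p.2.2) (μ.prod (μ.prod μ))

/-- The coordinatewise majority (median) operation on the finite cube `{0,1}ⁿ`. -/
def maj3 {n : ℕ} (x y z : Fin n → ZMod 2) : Fin n → ZMod 2 :=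
  fun i => x i * y i + y i * z i + x i * z i

lemma maj3_eq {k : ℕ} (x y z : Fin k → ZMod 2) : maj3 x y z = x * y + y * z + x * z := rfl

lemma maj3_insertNth {n : ℕ} (i : Fin (n+1)) (ε δ ζ : ZMod 2) (a b c : Fin n → ZMod 2) :
    maj3 (i.insertNth ε a) (i.insertNth δ b) (i.insertNth ζ c)
      = i.insertNth (ε*δ + δ*ζ + ε*ζ) (maj3 a b c) := by
  simp only [maj3_eq, ← Fin.insertNth_mul, ← Fin.insertNth_add]

lemma insertNth_inj {n : ℕ} (i : Fin (n+1)) {b b' : ZMod 2} {y y' : Fin n → ZMod 2}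
    (h : i.insertNth (α := fun _ => ZMod 2) b y = i.insertNth b' y') : b = b' ∧ y = y' := by
  constructor
  · have h1 := congrArg (fun f => f i) h
    simpa using h1
  · have h2 := congrArg i.removeNth h
    simpa using h2

lemma zsum {M : Type*} [AddCommMonoid M] (f : ZMod 2 → M) : ∑ b, f b = f 0 + f 1 := by
  have h : (Finset.univ : Finset (ZMod 2)) = {0, 1} := by decide
  rw [h, Finset.sum_insert (by decide), Finset.sum_singleton]

lemma sum_ins {n : ℕ} (i : Fin (n+1)) (f : (Fin (n+1) → ZMod 2) → ℝ) :
    ∑ x, f x = ∑ b : ZMod 2, ∑ y : Fin n → ZMod 2, f (i.insertNth b y) := by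
  rw [← Equiv.sum_comp (Fin.insertNthEquiv (fun _ => ZMod 2) i) f, Fintype.sum_prod_type]
  rfl

lemma meas_finset {α : Type*} [MeasurableSpace α] [MeasurableSingletonClass α]
    (μ : Measure α) (s : Finset α) : μ s = ∑ x ∈ s, μ {x} := by
  have h : (s : Set α) = ⋃ x ∈ s, {x} := by ext; simp
  rw [h, measure_biUnion_finset]
  · intro x _ y _ hxy
    simp [Function.onFun, Set.disjoint_left, hxy]
  · exact fun b _ => measurableSet_singleton b

abbrev Cube (n : ℕ) := Fin n → ZMod 2

noncomputable def ind (c : Prop) [Decidable c] : ℝ := if c then 1 else 0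

lemma ind_and (c d : Prop) [Decidable c] [Decidable d] : ind (c ∧ d) = ind c * ind d := by
  by_cases hc : c <;> by_cases hd : d <;> simp [ind, hc, hd]

lemma ind_congr {c d : Prop} [Decidable c] [Decidable d] (h : c ↔ d) : ind c = ind d := by
  simp only [ind]; split_ifs with h1 h2 <;> tauto

lemma sum_ind_eq (v : ZMod 2) : ∑ η : ZMod 2, ind (v = η) = 1 := by
  rw [zsum]; rcases (show v = 0 ∨ v = 1 by revert v; decide) with rfl | rfl <;> norm_num [ind, show (1:ZMod 2) ≠ 0 from by decide, show (0:ZMod 2) ≠ 1 from by decide]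

def bigE {n : ℕ} (i : Fin (n+1)) :
    ((ZMod 2 × ZMod 2 × ZMod 2) × (Cube n × Cube n × Cube n)) ≃
      (Cube (n+1) × Cube (n+1) × Cube (n+1)) where
  toFun q := (i.insertNth q.1.1 q.2.1, i.insertNth q.1.2.1 q.2.2.1, i.insertNth q.1.2.2 q.2.2.2)
  invFun P := ((P.1 i, P.2.1 i, P.2.2 i), (i.removeNth P.1, i.removeNth P.2.1, i.removeNth P.2.2))
  left_inv q := by simp [Fin.insertNth_apply_same]
  right_inv P := by simp [Fin.insertNth_self_removeNth]

def Bal {n : ℕ} (w : Cube n → ℝ) : Prop :=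
  ∀ x, (∑ P : Cube n × Cube n × Cube n,
    ind (maj3 P.1 P.2.1 P.2.2 = x) * (w P.1 * (w P.2.1 * w P.2.2))) = w x

lemma triple_mul_sum (f g h : ZMod 2 → ℝ) :
    (∑ ε, f ε) * ((∑ δ, g δ) * (∑ ζ, h ζ))
      = ∑ r : ZMod 2 × ZMod 2 × ZMod 2, f r.1 * (g r.2.1 * h r.2.2) := by
  simp only [Fintype.sum_prod_type, zsum]
  ring

lemma bal_proj {n : ℕ} (i : Fin (n+1)) (w : Cube (n+1) → ℝ) (hw : Bal w) :
    Bal (fun y => w (i.insertNth 0 y) + w (i.insertNth 1 y)) := by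
  set w' : Cube n → ℝ := fun a => w (i.insertNth 0 a) + w (i.insertNth 1 a) with hw'
  intro y
  have hsplit : ∀ a : Cube n, w' a = ∑ ε : ZMod 2, w (i.insertNth ε a) :=
    fun a => (zsum (fun b => w (i.insertNth b a))).symm
  have mid : ∀ η : ZMod 2, w (i.insertNth η y) =
      ∑ q : (ZMod 2 × ZMod 2 × ZMod 2) × (Cube n × Cube n × Cube n),
        ind (q.1.1*q.1.2.1 + q.1.2.1*q.1.2.2 + q.1.1*q.1.2.2 = η) *
          (ind (maj3 q.2.1 q.2.2.1 q.2.2.2 = y) *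
           (w (i.insertNth q.1.1 q.2.1) *
            (w (i.insertNth q.1.2.1 q.2.2.1) * w (i.insertNth q.1.2.2 q.2.2.2)))) := by
    intro η
    rw [← hw (i.insertNth η y), ← Equiv.sum_comp (bigE i)]
    refine Finset.sum_congr rfl fun q _ => ?_
    simp only [bigE, Equiv.coe_fn_mk]
    have hiff : (maj3 (i.insertNth q.1.1 q.2.1) (i.insertNth q.1.2.1 q.2.2.1)
        (i.insertNth q.1.2.2 q.2.2.2) = i.insertNth η y)
        ↔ ((q.1.1*q.1.2.1 + q.1.2.1*q.1.2.2 + q.1.1*q.1.2.2 = η) ∧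
           (maj3 q.2.1 q.2.2.1 q.2.2.2 = y)) := by
      rw [maj3_insertNth]
      exact ⟨fun h => insertNth_inj i h, fun h => by rw [h.1, h.2]⟩
    exact (congrArg (· * _) (ind_congr hiff)).trans (by rw [ind_and, mul_assoc])
  calc ∑ P : Cube n × Cube n × Cube n,
        ind (maj3 P.1 P.2.1 P.2.2 = y) * (w' P.1 * (w' P.2.1 * w' P.2.2))
      = ∑ P : Cube n × Cube n × Cube n, ∑ r : ZMod 2 × ZMod 2 × ZMod 2,
          ind (maj3 P.1 P.2.1 P.2.2 = y) *
            (w (i.insertNth r.1 P.1) *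
             (w (i.insertNth r.2.1 P.2.1) * w (i.insertNth r.2.2 P.2.2))) :=
        Finset.sum_congr rfl fun P _ => by
          rw [hsplit, hsplit, hsplit, triple_mul_sum, Finset.mul_sum]
    _ = ∑ η : ZMod 2, w (i.insertNth η y) := by
          conv_rhs =>
            rw [Finset.sum_congr rfl fun η _ => mid η, Finset.sum_comm]
            simp only [← Finset.sum_mul, sum_ind_eq, one_mul]
            rw [Fintype.sum_prod_type, Finset.sum_comm]
    _ = w' y := (hsplit y).symm

noncomputable def χ (b : ZMod 2) : ℝ := if b = 0 then 1 else -1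

noncomputable def sgn {n : ℕ} (x : Cube n) : ℝ := ∏ i, χ (x i)

lemma zcases (b : ZMod 2) : b = 0 ∨ b = 1 := by revert b; decide

lemma sgn_zero {n : ℕ} : sgn (0 : Cube n) = 1 := by simp [sgn, χ]

lemma sgn_update {n : ℕ} (x : Cube n) (i : Fin n) (b : ZMod 2) :
    sgn (Function.update x i b) = χ b * ∏ j ∈ Finset.univ \ {i}, χ (x j) := by
  unfold sgn
  have h : (fun j => χ (Function.update x i b j)) = Function.update (fun j => χ (x j)) i (χ b) := by
    funext j
    rcases eq_or_ne j i with h | h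
    · subst h; simp
    · simp [Function.update_of_ne h]
  calc ∏ j, χ (Function.update x i b j) = ∏ j, Function.update (fun j => χ (x j)) i (χ b) j := by
        rw [h]
    _ = χ b * ∏ j ∈ Finset.univ \ {i}, χ (x j) :=
        Finset.prod_update_of_mem (Finset.mem_univ i) _ _

def tripleD {n : ℕ} : (Fin n → ZMod 2 × ZMod 2 × ZMod 2) ≃ (Cube n × Cube n × Cube n) where
  toFun f := (fun i => (f i).1, fun i => (f i).2.1, fun i => (f i).2.2)
  invFun P := fun i => (P.1 i, P.2.1 i, P.2.2 i)
  left_inv f := by funext i; rfl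
  right_inv P := rfl

lemma fact_lemma {m : ℕ} (H : ZMod 2 → ZMod 2 → ZMod 2 → ℝ) :
    ∑ P : Cube m × Cube m × Cube m, ∏ i, H (P.1 i) (P.2.1 i) (P.2.2 i)
      = (∑ t : ZMod 2 × ZMod 2 × ZMod 2, H t.1 t.2.1 t.2.2) ^ m := by
  rw [← Equiv.sum_comp (tripleD (n := m))]
  have h := Finset.sum_prod_piFinset (Finset.univ : Finset (ZMod 2 × ZMod 2 × ZMod 2))
    (fun (_ : Fin m) t => H t.1 t.2.1 t.2.2)
  rw [Fintype.piFinset_univ] at h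
  calc ∑ f : Fin m → ZMod 2 × ZMod 2 × ZMod 2,
        ∏ i, H ((tripleD f).1 i) ((tripleD f).2.1 i) ((tripleD f).2.2 i)
      = ∑ f : Fin m → ZMod 2 × ZMod 2 × ZMod 2, ∏ i, H (f i).1 (f i).2.1 (f i).2.2 := rfl
    _ = ∏ _i : Fin m, ∑ t : ZMod 2 × ZMod 2 × ZMod 2, H t.1 t.2.1 t.2.2 := h
    _ = _ := by rw [Finset.prod_const, Finset.card_univ, Fintype.card_fin]

lemma ind_forall {m : ℕ} (p : Fin m → Prop) [∀ i, Decidable (p i)] :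
    ind (∀ i, p i) = ∏ i, ind (p i) := by
  by_cases h : ∀ i, p i
  · rw [ind, if_pos h]
    rw [Finset.prod_congr rfl fun i _ => show ind (p i) = 1 by rw [ind, if_pos (h i)]]
    simp
  · rw [ind, if_neg h]
    push_neg at h
    obtain ⟨i0, hi0⟩ := h
    exact (Finset.prod_eq_zero (Finset.mem_univ i0) (by rw [ind, if_neg hi0])).symm

lemma ind_maj3_zero {m : ℕ} (P : Cube m × Cube m × Cube m) :
    ind (maj3 P.1 P.2.1 P.2.2 = 0)
      = ∏ i, ind (P.1 i * P.2.1 i + P.2.1 i * P.2.2 i + P.1 i * P.2.2 i = 0) := by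
  rw [ind_congr (funext_iff (f := maj3 P.1 P.2.1 P.2.2) (g := 0)), ind_forall]
  exact Finset.prod_congr rfl fun i _ => ind_congr Iff.rfl

lemma V0 : ∑ t : ZMod 2 × ZMod 2 × ZMod 2,
    ind (t.1*t.2.1 + t.2.1*t.2.2 + t.1*t.2.2 = 0) = 4 := by
  simp only [Fintype.sum_prod_type, zsum]
  norm_num [ind, χ, show (3:ZMod 2) ≠ 0 from by decide]

lemma Va : ∑ t : ZMod 2 × ZMod 2 × ZMod 2,
    ind (t.1*t.2.1 + t.2.1*t.2.2 + t.1*t.2.2 = 0) * χ t.1 = 2 := by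
  simp only [Fintype.sum_prod_type, zsum]
  norm_num [ind, χ, show (3:ZMod 2) ≠ 0 from by decide]

lemma Vb : ∑ t : ZMod 2 × ZMod 2 × ZMod 2,
    ind (t.1*t.2.1 + t.2.1*t.2.2 + t.1*t.2.2 = 0) * χ t.2.1 = 2 := by
  simp only [Fintype.sum_prod_type, zsum]
  norm_num [ind, χ, show (3:ZMod 2) ≠ 0 from by decide]

lemma Vc : ∑ t : ZMod 2 × ZMod 2 × ZMod 2,
    ind (t.1*t.2.1 + t.2.1*t.2.2 + t.1*t.2.2 = 0) * χ t.2.2 = 2 := by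
  simp only [Fintype.sum_prod_type, zsum]
  norm_num [ind, χ, show (3:ZMod 2) ≠ 0 from by decide]

lemma Vab : ∑ t : ZMod 2 × ZMod 2 × ZMod 2,
    ind (t.1*t.2.1 + t.2.1*t.2.2 + t.1*t.2.2 = 0) * (χ t.1 * χ t.2.1) = 0 := by
  simp only [Fintype.sum_prod_type, zsum]
  norm_num [ind, χ, show (3:ZMod 2) ≠ 0 from by decide]

lemma Vbc : ∑ t : ZMod 2 × ZMod 2 × ZMod 2,
    ind (t.1*t.2.1 + t.2.1*t.2.2 + t.1*t.2.2 = 0) * (χ t.2.1 * χ t.2.2) = 0 := by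
  simp only [Fintype.sum_prod_type, zsum]
  norm_num [ind, χ, show (3:ZMod 2) ≠ 0 from by decide]

lemma Vac : ∑ t : ZMod 2 × ZMod 2 × ZMod 2,
    ind (t.1*t.2.1 + t.2.1*t.2.2 + t.1*t.2.2 = 0) * (χ t.1 * χ t.2.2) = 0 := by
  simp only [Fintype.sum_prod_type, zsum]
  norm_num [ind, χ, show (3:ZMod 2) ≠ 0 from by decide]

lemma Vabc : ∑ t : ZMod 2 × ZMod 2 × ZMod 2,
    ind (t.1*t.2.1 + t.2.1*t.2.2 + t.1*t.2.2 = 0) * (χ t.1 * (χ t.2.1 * χ t.2.2)) = -2 := by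
  simp only [Fintype.sum_prod_type, zsum]
  norm_num [ind, χ, show (3:ZMod 2) ≠ 0 from by decide]

lemma final_eq {n : ℕ} (s d : ℝ) (w : Cube (n+1) → ℝ) (hrep : ∀ x, w x = s + sgn x * d)
    (hb : Bal w) :
    s^3 * 4^(n+1) + 3*(s^2*d) * 2^(n+1) + d^3 * (-2)^(n+1) = s + d := by
  have h0 := hb 0
  rw [hrep 0, sgn_zero, one_mul] at h0
  have S0 : ∑ P : Cube (n+1) × Cube (n+1) × Cube (n+1),
      ind (maj3 P.1 P.2.1 P.2.2 = 0) = (4:ℝ)^(n+1) := by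
    calc ∑ P : Cube (n+1) × Cube (n+1) × Cube (n+1), ind (maj3 P.1 P.2.1 P.2.2 = 0)
        = ∑ P : Cube (n+1) × Cube (n+1) × Cube (n+1),
            ∏ i, ind (P.1 i * P.2.1 i + P.2.1 i * P.2.2 i + P.1 i * P.2.2 i = 0) :=
          Finset.sum_congr rfl fun P _ => ind_maj3_zero P
      _ = (∑ t : ZMod 2 × ZMod 2 × ZMod 2,
            ind (t.1*t.2.1 + t.2.1*t.2.2 + t.1*t.2.2 = 0)) ^ (n+1) :=
          fact_lemma (fun a b c => ind (a*b + b*c + a*c = 0))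
      _ = _ := by rw [V0]
  have Sa : ∑ P : Cube (n+1) × Cube (n+1) × Cube (n+1),
      ind (maj3 P.1 P.2.1 P.2.2 = 0) * sgn P.1 = (2:ℝ)^(n+1) := by
    calc ∑ P : Cube (n+1) × Cube (n+1) × Cube (n+1), ind (maj3 P.1 P.2.1 P.2.2 = 0) * sgn P.1
        = ∑ P : Cube (n+1) × Cube (n+1) × Cube (n+1),
            ∏ i, (ind (P.1 i * P.2.1 i + P.2.1 i * P.2.2 i + P.1 i * P.2.2 i = 0) * χ (P.1 i)) :=
          Finset.sum_congr rfl fun P _ => by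
            rw [ind_maj3_zero]; simp only [sgn]; rw [← Finset.prod_mul_distrib]
      _ = (∑ t : ZMod 2 × ZMod 2 × ZMod 2,
            ind (t.1*t.2.1 + t.2.1*t.2.2 + t.1*t.2.2 = 0) * χ t.1) ^ (n+1) :=
          fact_lemma (fun a b c => ind (a*b + b*c + a*c = 0) * χ a)
      _ = _ := by rw [Va]
  have Sb : ∑ P : Cube (n+1) × Cube (n+1) × Cube (n+1),
      ind (maj3 P.1 P.2.1 P.2.2 = 0) * sgn P.2.1 = (2:ℝ)^(n+1) := by
    calc ∑ P : Cube (n+1) × Cube (n+1) × Cube (n+1), ind (maj3 P.1 P.2.1 P.2.2 = 0) * sgn P.2.1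
        = ∑ P : Cube (n+1) × Cube (n+1) × Cube (n+1),
            ∏ i, (ind (P.1 i * P.2.1 i + P.2.1 i * P.2.2 i + P.1 i * P.2.2 i = 0) * χ (P.2.1 i)) :=
          Finset.sum_congr rfl fun P _ => by
            rw [ind_maj3_zero]; simp only [sgn]; rw [← Finset.prod_mul_distrib]
      _ = (∑ t : ZMod 2 × ZMod 2 × ZMod 2,
            ind (t.1*t.2.1 + t.2.1*t.2.2 + t.1*t.2.2 = 0) * χ t.2.1) ^ (n+1) :=
          fact_lemma (fun a b c => ind (a*b + b*c + a*c = 0) * χ b)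
      _ = _ := by rw [Vb]
  have Sc : ∑ P : Cube (n+1) × Cube (n+1) × Cube (n+1),
      ind (maj3 P.1 P.2.1 P.2.2 = 0) * sgn P.2.2 = (2:ℝ)^(n+1) := by
    calc ∑ P : Cube (n+1) × Cube (n+1) × Cube (n+1), ind (maj3 P.1 P.2.1 P.2.2 = 0) * sgn P.2.2
        = ∑ P : Cube (n+1) × Cube (n+1) × Cube (n+1),
            ∏ i, (ind (P.1 i * P.2.1 i + P.2.1 i * P.2.2 i + P.1 i * P.2.2 i = 0) * χ (P.2.2 i)) :=
          Finset.sum_congr rfl fun P _ => by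
            rw [ind_maj3_zero]; simp only [sgn]; rw [← Finset.prod_mul_distrib]
      _ = (∑ t : ZMod 2 × ZMod 2 × ZMod 2,
            ind (t.1*t.2.1 + t.2.1*t.2.2 + t.1*t.2.2 = 0) * χ t.2.2) ^ (n+1) :=
          fact_lemma (fun a b c => ind (a*b + b*c + a*c = 0) * χ c)
      _ = _ := by rw [Vc]
  have Sab : ∑ P : Cube (n+1) × Cube (n+1) × Cube (n+1),
      ind (maj3 P.1 P.2.1 P.2.2 = 0) * (sgn P.1 * sgn P.2.1) = 0 := by
    calc ∑ P : Cube (n+1) × Cube (n+1) × Cube (n+1),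
          ind (maj3 P.1 P.2.1 P.2.2 = 0) * (sgn P.1 * sgn P.2.1)
        = ∑ P : Cube (n+1) × Cube (n+1) × Cube (n+1),
            ∏ i, (ind (P.1 i * P.2.1 i + P.2.1 i * P.2.2 i + P.1 i * P.2.2 i = 0) *
              (χ (P.1 i) * χ (P.2.1 i))) :=
          Finset.sum_congr rfl fun P _ => by
            rw [ind_maj3_zero]; simp only [sgn]
            rw [← Finset.prod_mul_distrib, ← Finset.prod_mul_distrib]
      _ = (∑ t : ZMod 2 × ZMod 2 × ZMod 2,
            ind (t.1*t.2.1 + t.2.1*t.2.2 + t.1*t.2.2 = 0) * (χ t.1 * χ t.2.1)) ^ (n+1) :=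
          fact_lemma (fun a b c => ind (a*b + b*c + a*c = 0) * (χ a * χ b))
      _ = _ := by rw [Vab, zero_pow (Nat.succ_ne_zero n)]
  have Sbc : ∑ P : Cube (n+1) × Cube (n+1) × Cube (n+1),
      ind (maj3 P.1 P.2.1 P.2.2 = 0) * (sgn P.2.1 * sgn P.2.2) = 0 := by
    calc ∑ P : Cube (n+1) × Cube (n+1) × Cube (n+1),
          ind (maj3 P.1 P.2.1 P.2.2 = 0) * (sgn P.2.1 * sgn P.2.2)
        = ∑ P : Cube (n+1) × Cube (n+1) × Cube (n+1),
            ∏ i, (ind (P.1 i * P.2.1 i + P.2.1 i * P.2.2 i + P.1 i * P.2.2 i = 0) *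
              (χ (P.2.1 i) * χ (P.2.2 i))) :=
          Finset.sum_congr rfl fun P _ => by
            rw [ind_maj3_zero]; simp only [sgn]
            rw [← Finset.prod_mul_distrib, ← Finset.prod_mul_distrib]
      _ = (∑ t : ZMod 2 × ZMod 2 × ZMod 2,
            ind (t.1*t.2.1 + t.2.1*t.2.2 + t.1*t.2.2 = 0) * (χ t.2.1 * χ t.2.2)) ^ (n+1) :=
          fact_lemma (fun a b c => ind (a*b + b*c + a*c = 0) * (χ b * χ c))
      _ = _ := by rw [Vbc, zero_pow (Nat.succ_ne_zero n)]
  have Sac : ∑ P : Cube (n+1) × Cube (n+1) × Cube (n+1),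
      ind (maj3 P.1 P.2.1 P.2.2 = 0) * (sgn P.1 * sgn P.2.2) = 0 := by
    calc ∑ P : Cube (n+1) × Cube (n+1) × Cube (n+1),
          ind (maj3 P.1 P.2.1 P.2.2 = 0) * (sgn P.1 * sgn P.2.2)
        = ∑ P : Cube (n+1) × Cube (n+1) × Cube (n+1),
            ∏ i, (ind (P.1 i * P.2.1 i + P.2.1 i * P.2.2 i + P.1 i * P.2.2 i = 0) *
              (χ (P.1 i) * χ (P.2.2 i))) :=
          Finset.sum_congr rfl fun P _ => by
            rw [ind_maj3_zero]; simp only [sgn]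
            rw [← Finset.prod_mul_distrib, ← Finset.prod_mul_distrib]
      _ = (∑ t : ZMod 2 × ZMod 2 × ZMod 2,
            ind (t.1*t.2.1 + t.2.1*t.2.2 + t.1*t.2.2 = 0) * (χ t.1 * χ t.2.2)) ^ (n+1) :=
          fact_lemma (fun a b c => ind (a*b + b*c + a*c = 0) * (χ a * χ c))
      _ = _ := by rw [Vac, zero_pow (Nat.succ_ne_zero n)]
  have Sabc : ∑ P : Cube (n+1) × Cube (n+1) × Cube (n+1),
      ind (maj3 P.1 P.2.1 P.2.2 = 0) * (sgn P.1 * (sgn P.2.1 * sgn P.2.2)) = (-2:ℝ)^(n+1) := by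
    calc ∑ P : Cube (n+1) × Cube (n+1) × Cube (n+1),
          ind (maj3 P.1 P.2.1 P.2.2 = 0) * (sgn P.1 * (sgn P.2.1 * sgn P.2.2))
        = ∑ P : Cube (n+1) × Cube (n+1) × Cube (n+1),
            ∏ i, (ind (P.1 i * P.2.1 i + P.2.1 i * P.2.2 i + P.1 i * P.2.2 i = 0) *
              (χ (P.1 i) * (χ (P.2.1 i) * χ (P.2.2 i)))) :=
          Finset.sum_congr rfl fun P _ => by
            rw [ind_maj3_zero]; simp only [sgn]
            rw [← Finset.prod_mul_distrib, ← Finset.prod_mul_distrib, ← Finset.prod_mul_distrib]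
      _ = (∑ t : ZMod 2 × ZMod 2 × ZMod 2,
            ind (t.1*t.2.1 + t.2.1*t.2.2 + t.1*t.2.2 = 0) * (χ t.1 * (χ t.2.1 * χ t.2.2))) ^ (n+1) :=
          fact_lemma (fun a b c => ind (a*b + b*c + a*c = 0) * (χ a * (χ b * χ c)))
      _ = _ := by rw [Vabc]
  have hsum : ∑ P : Cube (n+1) × Cube (n+1) × Cube (n+1),
      ind (maj3 P.1 P.2.1 P.2.2 = 0) * (w P.1 * (w P.2.1 * w P.2.2))
        = s^3 * 4^(n+1) + 3*(s^2*d) * 2^(n+1) + d^3 * (-2)^(n+1) := by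
    calc ∑ P : Cube (n+1) × Cube (n+1) × Cube (n+1),
          ind (maj3 P.1 P.2.1 P.2.2 = 0) * (w P.1 * (w P.2.1 * w P.2.2))
        = ∑ P : Cube (n+1) × Cube (n+1) × Cube (n+1),
            (s^3 * ind (maj3 P.1 P.2.1 P.2.2 = 0)
             + s^2*d * (ind (maj3 P.1 P.2.1 P.2.2 = 0) * sgn P.1)
             + s^2*d * (ind (maj3 P.1 P.2.1 P.2.2 = 0) * sgn P.2.1)
             + s^2*d * (ind (maj3 P.1 P.2.1 P.2.2 = 0) * sgn P.2.2)
             + s*d^2 * (ind (maj3 P.1 P.2.1 P.2.2 = 0) * (sgn P.1 * sgn P.2.1))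
             + s*d^2 * (ind (maj3 P.1 P.2.1 P.2.2 = 0) * (sgn P.2.1 * sgn P.2.2))
             + s*d^2 * (ind (maj3 P.1 P.2.1 P.2.2 = 0) * (sgn P.1 * sgn P.2.2))
             + d^3 * (ind (maj3 P.1 P.2.1 P.2.2 = 0) * (sgn P.1 * (sgn P.2.1 * sgn P.2.2)))) :=
          Finset.sum_congr rfl fun P _ => by
            rw [hrep P.1, hrep P.2.1, hrep P.2.2]; ring
      _ = _ := by
          simp only [Finset.sum_add_distrib, ← Finset.mul_sum]
          rw [S0, Sa, Sb, Sc, Sab, Sbc, Sac, Sabc]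
          ring
  rw [← hsum, h0]

theorem key : ∀ n : ℕ, ∀ w : Cube n → ℝ, (∀ x, 0 < w x) → (∑ x, w x = 1) → Bal w →
    ∀ x, w x = 1 / 2 ^ n := by
  intro n
  induction n with
  | zero =>
    intro w _ hsum _ x
    have h1 : ∑ y : Cube 0, w y = w x := Fintype.sum_subsingleton w x
    rw [← h1, hsum]
    norm_num
  | succ n ih =>
    intro w hpos hsum hbal
    have hproj : ∀ i : Fin (n+1), ∀ y : Cube n,
        w (i.insertNth 0 y) + w (i.insertNth 1 y) = 1 / 2 ^ n := by
      intro i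
      refine ih (fun y => w (i.insertNth 0 y) + w (i.insertNth 1 y))
        (fun y => add_pos (hpos _) (hpos _)) ?_ (bal_proj i w hbal)
      calc ∑ y, (w (i.insertNth 0 y) + w (i.insertNth 1 y))
          = ∑ y, ∑ b : ZMod 2, w (i.insertNth b y) :=
            Finset.sum_congr rfl fun y _ => (zsum (fun b => w (i.insertNth b y))).symm
        _ = ∑ b : ZMod 2, ∑ y, w (i.insertNth b y) := Finset.sum_comm
        _ = ∑ x, w x := (sum_ins i w).symm
        _ = 1 := hsum
    have hflip : ∀ (x : Cube (n+1)) (i : Fin (n+1)),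
        w x + w (Function.update x i (x i + 1)) = 1 / 2 ^ n := by
      intro x i
      have h := hproj i (i.removeNth x)
      rw [Fin.insertNth_removeNth, Fin.insertNth_removeNth] at h
      rcases zcases (x i) with hxi | hxi
      · rw [hxi, zero_add]
        rw [← hxi, Function.update_eq_self] at h
        exact h
      · rw [hxi, show (1:ZMod 2)+1 = 0 from rfl]
        rw [← hxi] at h
        conv at h => rw [Function.update_eq_self]
        rw [add_comm]
        exact h
    set s : ℝ := 1 / 2 ^ (n+1) with hs
    set δ : ℝ := w 0 - s with hδ
    have h2s : (1:ℝ)/2^n = 2 * s := by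
      rw [hs]; rw [pow_succ]; field_simp
    have hrep : ∀ x : Cube (n+1), w x = s + sgn x * δ := by
      have main : ∀ k (x : Cube (n+1)),
          (Finset.univ.filter fun j => x j = 1).card = k → w x = s + sgn x * δ := by
        intro k
        induction k with
        | zero =>
          intro x hx
          have hx0 : x = 0 := by
            funext j
            have hne : x j ≠ 1 := by
              intro h
              have hmem : j ∈ Finset.univ.filter fun j => x j = 1 := by simp [h]
              rw [Finset.card_eq_zero] at hx
              rw [hx] at hmem
              exact absurd hmem (Finset.notMem_empty j)
            rcases zcases (x j) with h | h
            · exact h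
            · exact absurd h hne
          rw [hx0, sgn_zero, hδ]; ring
        | succ k ihk =>
          intro x hx
          have hne : (Finset.univ.filter fun j => x j = 1).Nonempty := by
            rw [← Finset.card_pos, hx]; omega
          obtain ⟨i, hi⟩ := hne
          have hxi : x i = 1 := by simpa using hi
          have hstep := hflip x i
          rw [hxi, show (1:ZMod 2)+1 = 0 from rfl] at hstep
          have hcard : (Finset.univ.filter fun j => Function.update x i 0 j = 1).card = k := by
            have hset : (Finset.univ.filter fun j => Function.update x i 0 j = 1)
                = (Finset.univ.filter fun j => x j = 1).erase i := by
              ext j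
              rcases eq_or_ne j i with h | h
              · subst h; simp
              · simp [Function.update_of_ne h, h]
            rw [hset, Finset.card_erase_of_mem hi, hx]
            omega
          have hw' := ihk (Function.update x i 0) hcard
          have hsgnx : sgn x = - sgn (Function.update x i 0) := by
            have e1 : sgn (Function.update x i 0)
                = χ 0 * ∏ j ∈ Finset.univ \ {i}, χ (x j) := sgn_update x i 0
            have e2 : sgn x = χ 1 * ∏ j ∈ Finset.univ \ {i}, χ (x j) := by
              conv_lhs => rw [show x = Function.update x i 1 by
                rw [← hxi, Function.update_eq_self]]
              exact sgn_update x i 1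
            rw [e1, e2]
            norm_num [χ]
          have hwx : w x = 2 * s - w (Function.update x i 0) := by
            rw [h2s] at hstep; linarith
          rw [hwx, hw', hsgnx]; ring
      intro x; exact main _ x rfl
    -- positivity bounds
    have hb1 : 0 < s + δ := by have := hpos 0; rw [hrep 0, sgn_zero, one_mul] at this; exact this
    have hb2 : 0 < s - δ := by
      have hx1 : sgn (Function.update (0 : Cube (n+1)) 0 1) = -1 := by
        rw [sgn_update]
        norm_num [χ]
      have := hpos (Function.update (0 : Cube (n+1)) 0 1)
      rw [hrep _, hx1] at this
      linarith
    -- final equation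
    have heq := final_eq s δ w hrep hbal
    have hdz : δ = 0 := by
      by_contra hδ0
      set t : ℝ := 2^(n+1) with ht
      have ht0 : (0:ℝ) < t := by positivity
      have hst : s * t = 1 := by rw [hs]; field_simp
      have h4 : (4:ℝ)^(n+1) = t^2 := by
        rw [ht, show (4:ℝ) = 2^2 by norm_num, ← pow_mul, ← pow_mul]; ring_nf
      have hneg : (-2:ℝ)^(n+1) = (-1)^(n+1) * t := by
        rw [ht, neg_pow]
      set E : ℝ := (-1)^(n+1) with hE
      have hE2 : E^2 = 1 := by
        rw [hE, ← pow_mul]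
        exact Even.neg_one_pow ⟨n+1, by ring⟩
      rw [h4, hneg] at heq
      have e1 : s^3*t^2 = s := by
        rw [show s^3*t^2 = s*((s*t)*(s*t)) from by ring, hst]; ring
      have e2 : 3*(s^2*δ)*t = 3*δ*s := by
        rw [show 3*(s^2*δ)*t = 3*δ*s*(s*t) from by ring, hst]; ring
      have e3 : δ * (E*t*δ^2 - (1 - 3*s)) = 0 := by nlinarith [heq, e1, e2]
      have e4 : E*t*δ^2 = 1 - 3*s := by
        rcases mul_eq_zero.mp e3 with h | h
        · exact absurd h hδ0
        · linarith
      have e5 : E*(t^2*δ^2) = t - 3 := by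
        have := congrArg (· * t) e4
        calc E*(t^2*δ^2) = E*t*δ^2*t := by ring
          _ = (1-3*s)*t := this
          _ = t - 3*(s*t) := by ring
          _ = t - 3 := by rw [hst]; ring
      have e6 : (t^2*δ^2)^2 = (t-3)^2 := by
        have := congrArg (·^2) e5
        calc (t^2*δ^2)^2 = E^2 * (t^2*δ^2)^2 := by rw [hE2]; ring
          _ = (E*(t^2*δ^2))^2 := by ring
          _ = (t-3)^2 := by rw [e5]
      have hsq : δ^2 < s^2 := sq_lt_sq' (by linarith) (by linarith)
      have hbd : t^2*δ^2 < 1 := by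
        have h1 : t^2*δ^2 < t^2*s^2 := by
          apply mul_lt_mul_of_pos_left hsq
          positivity
        have h2 : t^2*s^2 = 1 := by
          calc t^2*s^2 = (s*t)*(s*t) := by ring
            _ = 1 := by rw [hst]; ring
        linarith
      have hbd0 : 0 ≤ t^2*δ^2 := by positivity
      have e7 : (t-3)^2 < 1 := by
        rw [← e6]
        nlinarith [hbd, hbd0]
      have ht2 : t = 2 ∨ 4 ≤ t := by
        rcases Nat.eq_zero_or_pos n with h | h
        · left; rw [ht, h]; norm_num
        · right
          rw [ht]
          calc (4:ℝ) = 2^2 := by norm_num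
            _ ≤ 2^(n+1) := by
              apply pow_le_pow_right₀ (by norm_num)
              omega
      rcases ht2 with h | h
      · rw [h] at e7; norm_num at e7
      · nlinarith [e7]
    intro x
    rw [hrep x, hdz, hs]; ring

theorem stmt18 (n : ℕ) (μ : Measure (Fin n → ZMod 2)) [IsProbabilityMeasure μ]
    (hbal : selfMedian maj3 μ = μ)
    (hfull : ∀ x : Fin n → ZMod 2, 0 < μ {x}) :
    ∀ x : Fin n → ZMod 2, μ {x} = 1 / 2 ^ n := by
  set w : Cube n → ℝ := fun x => (μ {x}).toReal with hw
  have hfin : ∀ x : Cube n, μ {x} ≠ ⊤ := fun x => measure_ne_top μ _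
  have hpos : ∀ x, 0 < w x := fun x => ENNReal.toReal_pos (hfull x).ne' (hfin x)
  have hsum : ∑ x, w x = 1 := by
    have h1 : μ Set.univ = 1 := measure_univ
    have h2 : (Set.univ : Set (Cube n)) = ↑(Finset.univ : Finset (Cube n)) := by simp
    rw [h2, meas_finset] at h1
    have h3 := congrArg ENNReal.toReal h1
    rw [ENNReal.toReal_sum (fun x _ => hfin x), ENNReal.toReal_one] at h3
    exact h3
  have hBal : Bal w := by
    intro x
    have h1 : (selfMedian maj3 μ) {x} = μ {x} := by rw [hbal]
    have hmeas : Measurable (fun p : (Cube n) × (Cube n) × (Cube n) => maj3 p.1 p.2.1 p.2.2) :=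
      measurable_of_countable _
    rw [selfMedian, Measure.map_apply hmeas (measurableSet_singleton x)] at h1
    have h2 : (fun p : (Cube n) × (Cube n) × (Cube n) => maj3 p.1 p.2.1 p.2.2) ⁻¹' {x}
        = ↑(Finset.univ.filter fun p : (Cube n) × (Cube n) × (Cube n) =>
            maj3 p.1 p.2.1 p.2.2 = x) := by
      ext p; simp
    rw [h2, meas_finset] at h1
    have h3 : ∀ p : (Cube n) × (Cube n) × (Cube n),
        (μ.prod (μ.prod μ)) {p} = μ {p.1} * (μ {p.2.1} * μ {p.2.2}) := by
      intro p
      have e1 : ({p} : Set ((Cube n) × (Cube n) × (Cube n))) = {p.1} ×ˢ {p.2} := by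
        rw [Set.singleton_prod_singleton]
      have e2 : ({p.2} : Set ((Cube n) × (Cube n))) = {p.2.1} ×ˢ {p.2.2} := by
        rw [Set.singleton_prod_singleton]
      rw [e1, Measure.prod_prod, e2, Measure.prod_prod]
    rw [Finset.sum_congr rfl fun p _ => h3 p] at h1
    have h4 := congrArg ENNReal.toReal h1
    rw [ENNReal.toReal_sum (fun p _ => by
      exact ENNReal.mul_ne_top (hfin _) (ENNReal.mul_ne_top (hfin _) (hfin _)))] at h4
    simp only [ENNReal.toReal_mul] at h4
    calc ∑ P : Cube n × Cube n × Cube n,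
          ind (maj3 P.1 P.2.1 P.2.2 = x) * (w P.1 * (w P.2.1 * w P.2.2))
        = ∑ P ∈ Finset.univ.filter (fun P : Cube n × Cube n × Cube n =>
              maj3 P.1 P.2.1 P.2.2 = x), w P.1 * (w P.2.1 * w P.2.2) := by
          rw [Finset.sum_filter]
          refine Finset.sum_congr rfl fun p _ => ?_
          by_cases hc : maj3 p.1 p.2.1 p.2.2 = x <;> simp [ind, hc]
      _ = w x := h4
  have hkey := key n w hpos hsum hBal
  intro x
  have h5 : (μ {x}).toReal = 1 / 2 ^ n := hkey x
  have h6 : ((1 : ENNReal) / 2 ^ n).toReal = 1 / 2 ^ n := by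
    simp [ENNReal.toReal_div]
  exact (ENNReal.toReal_eq_toReal_iff' (hfin x) (by simp [ENNReal.div_eq_top])).mp
    (by rw [h5, ← h6])
end

section
/- Let M be a second countable compact topological median algebra and let μ be a balanced probability measure on M. Then the topological support of μ is a closed median subalgebra of M: for all x, y, z in supp(μ), m(x,y,z) ∈ supp(μ). -/
open MeasureTheory

/-- The topological support of a measure: points all of whose open neighborhoods
have positive measure. -/
def measSupport {M : Type*} [TopologicalSpace M] [MeasurableSpace M] (μ : Measure M) : Set M :=
  {x | ∀ U : Set M, IsOpen U → x ∈ U → 0 < μ U}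

theorem stmt19 {M : Type*} [TopologicalSpace M] [T2Space M] [CompactSpace M]
    [SecondCountableTopology M] [MeasurableSpace M] [BorelSpace M]
    (m : M → M → M → M) (hm : IsMedian m)
    (hcont : Continuous fun p : M × M × M => m p.1 p.2.1 p.2.2)
    (μ : Measure M) [IsProbabilityMeasure μ] (hbal : selfMedian m μ = μ) :
    IsClosed (measSupport μ) ∧
      ∀ x ∈ measSupport μ, ∀ y ∈ measSupport μ, ∀ z ∈ measSupport μ,
        m x y z ∈ measSupport μ := by
  constructor
  · rw [← isOpen_compl_iff]
    rw [isOpen_iff_forall_mem_open]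
    intro x hx
    simp only [measSupport, Set.mem_compl_iff, Set.mem_setOf_eq, not_forall] at hx
    obtain ⟨U, hU, hxU, hμU⟩ := hx
    refine ⟨U, fun y hy => ?_, hU, hxU⟩
    simp only [Set.mem_compl_iff, measSupport, Set.mem_setOf_eq, not_forall]
    exact ⟨U, hU, hy, by simpa using hμU⟩
  · intro x hx y hy z hz O hO hmO
    have hOm : MeasurableSet O := hO.measurableSet
    have hpre : IsOpen ((fun p : M × M × M => m p.1 p.2.1 p.2.2) ⁻¹' O) :=
      hO.preimage hcont
    have hmem : (x, y, z) ∈ (fun p : M × M × M => m p.1 p.2.1 p.2.2) ⁻¹' O := hmO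
    rw [isOpen_prod_iff] at hpre
    obtain ⟨U, V, hU, hV, hxU, hyzV, hUV⟩ := hpre x (y, z) hmem
    rw [isOpen_prod_iff] at hV
    obtain ⟨V₁, V₂, hV₁, hV₂, hyV, hzV, hV12⟩ := hV y z hyzV
    have key : μ U * (μ V₁ * μ V₂) ≤ μ O := by
      calc μ U * (μ V₁ * μ V₂) = (μ.prod (μ.prod μ)) (U ×ˢ (V₁ ×ˢ V₂)) := by
            rw [Measure.prod_prod, Measure.prod_prod]
        _ ≤ (μ.prod (μ.prod μ)) ((fun p : M × M × M => m p.1 p.2.1 p.2.2) ⁻¹' O) := by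
            apply measure_mono
            intro p hp
            exact hUV (Set.mk_mem_prod hp.1 (hV12 hp.2))
        _ = selfMedian m μ O := (Measure.map_apply hcont.measurable hOm).symm
        _ = μ O := by rw [hbal]
      
    have h1 := hx U hU hxU
    have h2 := hy V₁ hV₁ hyV
    have h3 := hz V₂ hV₂ hzV
    calc (0 : ENNReal) < μ U * (μ V₁ * μ V₂) := ENNReal.mul_pos h1.ne' (ENNReal.mul_pos h2.ne' h3.ne').ne' |>.bot_lt
      _ ≤ μ O := key
end
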